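/- If the vectors p₀, p₁, …, p_d ∈ ℝⁿ are linearly independent and sθ > 0, h > 0, then the matrix (sθ·h/‖p_λ‖)·δPᵀ·P⊥_{p_λ}·δP is positive definite for every λ ∈ ℝᵈ with p_λ ≠ 0, where δP has columns p_i − p₀ (i = 1,…,d), p_λ = p₀ + δP·λ, and P⊥_{p} = I − ppᵀ/(pᵀp). Consequently F₀(λ) = U_λ + sθ·h·‖p_λ‖ is strictly convex on any convex set where p_λ ≠ 0. -/

import Mathlib

open Matrix

lemma dot_self_pos {n : ℕ} {v : Fin n → ℝ} (h : v ≠ 0) : 0 < v ⬝ᵥ v := by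
  have h1 : 0 ≤ v ⬝ᵥ v := Finset.sum_nonneg fun i _ => mul_self_nonneg (v i)
  rcases h1.lt_or_eq with h'|h'
  · exact h'
  · exact absurd (dotProduct_self_eq_zero.mp h'.symm) h

lemma cs_strict {n : ℕ} {u v : Fin n → ℝ} (hu : u ≠ 0) (hnp : ∀ c : ℝ, v ≠ c • u) :
    (u ⬝ᵥ v) ^ 2 < (u ⬝ᵥ u) * (v ⬝ᵥ v) := by
  have hu0 : 0 < u ⬝ᵥ u := dot_self_pos hu
  set c : ℝ := (u ⬝ᵥ v) / (u ⬝ᵥ u) with hc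
  have hw : v - c • u ≠ 0 := fun H => hnp c (by rwa [sub_eq_zero] at H)
  have hw0 : 0 < (v - c • u) ⬝ᵥ (v - c • u) := dot_self_pos hw
  have hexp : (v - c • u) ⬝ᵥ (v - c • u)
      = v ⬝ᵥ v - 2 * c * (u ⬝ᵥ v) + c ^ 2 * (u ⬝ᵥ u) := by
    simp [sub_dotProduct, dotProduct_sub, smul_dotProduct, dotProduct_smul,
      dotProduct_comm v u]
    ring
  rw [hexp] at hw0
  have := hu0.ne'
  field_simp [hc] at hw0
  have hcu : c * (u ⬝ᵥ u) = u ⬝ᵥ v := by rw [hc]; field_simp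
  nlinarith [mul_pos hw0 hu0, hcu]

lemma strict_tri {n : ℕ} {u v : Fin n → ℝ} (hu : u ≠ 0) (hnp : ∀ c : ℝ, v ≠ c • u)
    {t s : ℝ} (ht : 0 < t) (hs : 0 < s) :
    Real.sqrt ((t • u + s • v) ⬝ᵥ (t • u + s • v))
      < t * Real.sqrt (u ⬝ᵥ u) + s * Real.sqrt (v ⬝ᵥ v) := by
  have hu0 : 0 < u ⬝ᵥ u := dot_self_pos hu
  have hv : v ≠ 0 := fun H => hnp 0 (by simp [H])
  have hv0 : 0 < v ⬝ᵥ v := dot_self_pos hv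
  have ha : 0 < Real.sqrt (u ⬝ᵥ u) := Real.sqrt_pos.mpr hu0
  have hb : 0 < Real.sqrt (v ⬝ᵥ v) := Real.sqrt_pos.mpr hv0
  have ha2 : Real.sqrt (u ⬝ᵥ u) ^ 2 = u ⬝ᵥ u := Real.sq_sqrt hu0.le
  have hb2 : Real.sqrt (v ⬝ᵥ v) ^ 2 = v ⬝ᵥ v := Real.sq_sqrt hv0.le
  have hcs : (u ⬝ᵥ v) ^ 2 < (u ⬝ᵥ u) * (v ⬝ᵥ v) := cs_strict hu hnp
  have huv : u ⬝ᵥ v < Real.sqrt (u ⬝ᵥ u) * Real.sqrt (v ⬝ᵥ v) := by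
    nlinarith [mul_pos ha hb]
  have hexp : (t • u + s • v) ⬝ᵥ (t • u + s • v)
      = t ^ 2 * (u ⬝ᵥ u) + 2 * t * s * (u ⬝ᵥ v) + s ^ 2 * (v ⬝ᵥ v) := by
    simp [add_dotProduct, dotProduct_add, smul_dotProduct, dotProduct_smul,
      dotProduct_comm v u]
    ring
  have hpos : 0 < t * Real.sqrt (u ⬝ᵥ u) + s * Real.sqrt (v ⬝ᵥ v) := by positivity
  rw [Real.sqrt_lt' hpos, hexp]
  nlinarith [mul_pos ht hs]

lemma aux_li {n d : ℕ} (p : Fin (d + 1) → (Fin n → ℝ)) (hli : LinearIndependent ℝ p)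
    (x μ : Fin d → ℝ) (t : ℝ)
    (hx : Matrix.mulVec (fun i k => p k.succ i - p 0 i) x
        = t • (p 0 + Matrix.mulVec (fun i k => p k.succ i - p 0 i) μ)) :
    t = 0 ∧ x = 0 := by
  set g : Fin (d + 1) → ℝ :=
    Fin.cons (t * (∑ k, μ k) - (∑ k, x k) - t) (fun k => x k - t * μ k) with hg
  have hsum : ∑ i, g i • p i = 0 := by
    funext j
    have hj := congrFun hx j
    simp only [Matrix.mulVec, dotProduct, Pi.smul_apply, Pi.add_apply, smul_eq_mul] at hj
    have e1 : ∀ (y : Fin d → ℝ), ∑ k, (p k.succ j - p 0 j) * y k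
        = (∑ k, y k * p k.succ j) - (∑ k, y k) * p 0 j := by
      intro y
      rw [Finset.sum_mul, ← Finset.sum_sub_distrib]
      exact Finset.sum_congr rfl fun k _ => by ring
    rw [e1, e1] at hj
    have e2 : ∑ k, (x k - t * μ k) * p k.succ j
        = (∑ k, x k * p k.succ j) - t * ∑ k, μ k * p k.succ j := by
      rw [Finset.mul_sum, ← Finset.sum_sub_distrib]
      exact Finset.sum_congr rfl fun k _ => by ring
    simp only [Finset.sum_apply, Pi.smul_apply, smul_eq_mul, Pi.zero_apply,
      Fin.sum_univ_succ, hg, Fin.cons_zero, Fin.cons_succ]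
    rw [e2]
    linarith [hj]
  have hg0 : ∀ i, g i = 0 := Fintype.linearIndependent_iff.mp hli g hsum
  have hxt : ∀ k, x k = t * μ k := fun k => by
    have := hg0 k.succ; rw [hg] at this; simp only [Fin.cons_succ] at this; linarith
  have ht : t = 0 := by
    have h0 := hg0 0
    rw [hg] at h0; simp only [Fin.cons_zero] at h0
    have hs : ∑ k, x k = t * ∑ k, μ k := by
      rw [Finset.mul_sum]; exact Finset.sum_congr rfl fun k _ => hxt k
    linarith
  exact ⟨ht, funext fun k => by simp [hxt k, ht]⟩

lemma vecMulVec_mulVec' {n : ℕ} (u w z : Fin n → ℝ) :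
    (vecMulVec u w).mulVec z = (w ⬝ᵥ z) • u := by
  funext i
  simp only [Matrix.mulVec, dotProduct, vecMulVec_apply, Pi.smul_apply, smul_eq_mul,
    Finset.sum_mul]
  exact Finset.sum_congr rfl fun j _ => by ring

/-- If `p₀,…,p_d` are linearly independent and `sθ, h > 0`, then the Hessian matrix
`(sθh/‖p_λ‖)·δPᵀ·P⊥_{p_λ}·δP` is positive definite wherever `p_λ ≠ 0`, and
consequently `F₀` is strictly convex on any convex set where `p_λ ≠ 0`. -/
theorem stmt2 {n d : ℕ} (p : Fin (d + 1) → (Fin n → ℝ))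
    (hli : LinearIndependent ℝ p) (sθ h : ℝ) (hs : 0 < sθ) (hh : 0 < h)
    (U0 : ℝ) (δU : Fin d → ℝ) :
    let δP : Matrix (Fin n) (Fin d) ℝ := fun i k => p k.succ i - p 0 i
    let pl : (Fin d → ℝ) → (Fin n → ℝ) := fun lam => p 0 + δP.mulVec lam
    (∀ lam : Fin d → ℝ, pl lam ≠ 0 →
      ((sθ * h / Real.sqrt (pl lam ⬝ᵥ pl lam)) •
        (δP.transpose *
          ((1 : Matrix (Fin n) (Fin n) ℝ) -
            ((pl lam ⬝ᵥ pl lam)⁻¹ • vecMulVec (pl lam) (pl lam))) * δP)).PosDef) ∧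
    ∀ S : Set (Fin d → ℝ), Convex ℝ S → (∀ lam ∈ S, pl lam ≠ 0) →
      StrictConvexOn ℝ S
        (fun lam => U0 + δU ⬝ᵥ lam + sθ * h * Real.sqrt (pl lam ⬝ᵥ pl lam)) := by
  intro δP pl
  constructor
  · -- positive definiteness
    intro lam hpl
    set P : Fin n → ℝ := pl lam with hP
    set q : ℝ := P ⬝ᵥ P with hq'
    have hq : 0 < q := dot_self_pos hpl
    set c : ℝ := sθ * h / Real.sqrt q with hc
    have hcpos : 0 < c := by
      apply div_pos (mul_pos hs hh) (Real.sqrt_pos.mpr hq)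
    set A : Matrix (Fin n) (Fin n) ℝ :=
      (1 : Matrix (Fin n) (Fin n) ℝ) - q⁻¹ • vecMulVec P P with hA'
    have hAherm : A.IsHermitian := by
      unfold Matrix.IsHermitian
      ext i j
      simp [hA', conjTranspose_apply, one_apply, vecMulVec_apply, eq_comm, mul_comm]
    have hδPH : δP.transpose = δPᴴ := by
      ext i j; simp [conjTranspose_apply]
    rw [Matrix.posDef_iff_dotProduct_mulVec]
    constructor
    · rw [hδPH]
      have hM := isHermitian_conjTranspose_mul_mul δP hAherm
      show (c • (δPᴴ * A * δP))ᴴ = c • (δPᴴ * A * δP)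
      rw [Matrix.conjTranspose_smul, hM.eq, star_trivial]
    · intro x hx
      set v : Fin n → ℝ := δP.mulVec x with hv'
      have hnp : ∀ c' : ℝ, v ≠ c' • P := by
        intro c' H
        have := (aux_li p hli x lam c' H).2
        exact hx this
      have hcs : (P ⬝ᵥ v) ^ 2 < q * (v ⬝ᵥ v) := cs_strict hpl hnp
      have hstarx : star x = x := funext fun i => rfl
      have hAv : A.mulVec v = v - q⁻¹ • ((P ⬝ᵥ v) • P) := by
        rw [hA', Matrix.sub_mulVec, Matrix.one_mulVec, Matrix.smul_mulVec,
          vecMulVec_mulVec']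
      have hform : star x ⬝ᵥ (c • (δP.transpose * A * δP)).mulVec x
          = c * (v ⬝ᵥ v - q⁻¹ * ((P ⬝ᵥ v) * (P ⬝ᵥ v))) := by
        rw [hstarx, Matrix.smul_mulVec, dotProduct_smul, smul_eq_mul]
        congr 1
        rw [← Matrix.mulVec_mulVec, ← Matrix.mulVec_mulVec,
          dotProduct_mulVec x δP.transpose, Matrix.vecMul_transpose, ← hv', hAv,
          dotProduct_sub, dotProduct_smul, dotProduct_smul, smul_eq_mul, smul_eq_mul,
          dotProduct_comm v P]
      rw [hform]
      apply mul_pos hcpos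
      have h1 : q⁻¹ * ((P ⬝ᵥ v) * (P ⬝ᵥ v)) < v ⬝ᵥ v := by
        rw [inv_mul_eq_div, div_lt_iff₀ hq]
        nlinarith [hcs]
      linarith
  · -- strict convexity
    intro S hconv hne
    refine ⟨hconv, ?_⟩
    intro a ha b hb hab t s ht hptwo hts
    have hu : pl a ≠ 0 := hne a ha
    have hnp : ∀ c' : ℝ, pl b ≠ c' • pl a := by
      intro c' H
      have hsub : δP.mulVec (b - a) = (c' - 1) • pl a := by
        rw [Matrix.mulVec_sub]
        have : pl b - pl a = δP.mulVec b - δP.mulVec a := by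
          show (p 0 + δP.mulVec b) - (p 0 + δP.mulVec a) = δP.mulVec b - δP.mulVec a
          abel
        rw [← this, H]
        funext j
        simp only [Pi.sub_apply, Pi.smul_apply, smul_eq_mul]
        ring
      have hx0 := (aux_li p hli (b - a) a (c' - 1) hsub).2
      have hba : b = a := sub_eq_zero.mp hx0
      exact hab hba.symm
    have hplin : pl (t • a + s • b) = t • pl a + s • pl b := by
      show p 0 + δP.mulVec (t • a + s • b) = t • pl a + s • pl b
      rw [Matrix.mulVec_add, Matrix.mulVec_smul, Matrix.mulVec_smul]
      funext j
      simp only [Pi.add_apply, Pi.smul_apply, smul_eq_mul]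
      show p 0 j + (t * δP.mulVec a j + s * δP.mulVec b j)
          = t * (p 0 j + δP.mulVec a j) + s * (p 0 j + δP.mulVec b j)
      linear_combination (-(p 0 j)) * hts
    have hdot : δU ⬝ᵥ (t • a + s • b) = t * (δU ⬝ᵥ a) + s * (δU ⬝ᵥ b) := by
      rw [dotProduct_add, dotProduct_smul, dotProduct_smul]
      simp [smul_eq_mul]
    have htri := strict_tri hu hnp ht hptwo
    simp only [smul_eq_mul]
    rw [hplin, hdot]
    have h2 : sθ * h * Real.sqrt ((t • pl a + s • pl b) ⬝ᵥ (t • pl a + s • pl b))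
        < sθ * h * (t * Real.sqrt (pl a ⬝ᵥ pl a) + s * Real.sqrt (pl b ⬝ᵥ pl b)) :=
      mul_lt_mul_of_pos_left htri (mul_pos hs hh)
    have hU : t * U0 + s * U0 = U0 := by rw [← add_mul, hts, one_mul]
    nlinarith [h2, hU]
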